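/- If f : X → Y is a surjective, monotone, perfect map between Hausdorff spaces and Y is a J-space, then X is a J-space. -/

import Mathlib

/-- A Hausdorff space `X` is a *J-space* if whenever `A`, `B` are closed sets with
`A ∪ B = X` and `A ∩ B` compact, then `A` or `B` is compact. -/
def IsJSpace (X : Type*) [TopologicalSpace X] : Prop :=
  ∀ A B : Set X, IsClosed A → IsClosed B → A ∪ B = Set.univ →
    IsCompact (A ∩ B) → IsCompact A ∨ IsCompact B

/-- A Hausdorff space `X` is a *strong J-space* if every compact `K ⊆ X` is contained in
a compact `L ⊆ X` with `X \ L` connected (the empty set counting as connected). -/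
def IsStrongJSpace (X : Type*) [TopologicalSpace X] : Prop :=
  ∀ K : Set X, IsCompact K → ∃ L : Set X, IsCompact L ∧ K ⊆ L ∧ IsPreconnected Lᶜ

/-- A map is *perfect* if it is closed and all fibers are compact. -/
def IsPerfectMap {X Y : Type*} [TopologicalSpace X] [TopologicalSpace Y] (f : X → Y) : Prop :=
  IsClosedMap f ∧ ∀ y : Y, IsCompact (f ⁻¹' {y})

/-- A map is *boundary-perfect* if it is closed and the topological boundary of each
fiber is compact. -/
def IsBoundaryPerfectMap {X Y : Type*} [TopologicalSpace X] [TopologicalSpace Y]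
    (f : X → Y) : Prop :=
  IsClosedMap f ∧ ∀ y : Y, IsCompact (frontier (f ⁻¹' {y}))

/-- J-spaces are preserved by monotone, perfect pre-images. -/
theorem isJSpace_of_monotone_perfect_preimage {X Y : Type*} [TopologicalSpace X]
    [T2Space X] [TopologicalSpace Y] [T2Space Y] (f : X → Y) (hf : Continuous f)
    (hsurj : Function.Surjective f) (hmono : ∀ y : Y, IsPreconnected (f ⁻¹' {y}))
    (hperf : IsPerfectMap f) (hY : IsJSpace Y) : IsJSpace X := by
  obtain ⟨hclosed, hfib⟩ := hperf
  have hproper : IsProperMap f :=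
    isProperMap_iff_isClosedMap_and_compact_fibers.mpr ⟨hf, hclosed, hfib⟩
  intro A B hA hB hAB hABc
  -- images
  have hA' : IsClosed (f '' A) := hclosed A hA
  have hB' : IsClosed (f '' B) := hclosed B hB
  have hcover : f '' A ∪ f '' B = Set.univ := by
    rw [← Set.image_union, hAB, Set.image_univ, Set.range_eq_univ.mpr hsurj]
  have hkey : f '' A ∩ f '' B = f '' (A ∩ B) := by
    apply Set.Subset.antisymm
    · rintro y ⟨⟨a, haA, rfl⟩, ⟨b, hbB, hb⟩⟩
      have h := (isPreconnected_closed_iff.mp (hmono (f a))) A B hA hB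
        (by rw [hAB]; exact Set.subset_univ _)
        ⟨a, rfl, haA⟩ ⟨b, hb, hbB⟩
      obtain ⟨x, hx, hxA, hxB⟩ := h
      exact ⟨x, ⟨hxA, hxB⟩, hx⟩
    · exact Set.image_inter_subset f A B
  have himc : IsCompact (f '' A ∩ f '' B) := by
    rw [hkey]; exact hABc.image hf
  rcases hY (f '' A) (f '' B) hA' hB' hcover himc with h | h
  · left
    exact (hproper.isCompact_preimage h).of_isClosed_subset hA
      (Set.subset_preimage_image f A)
  · right
    exact (hproper.isCompact_preimage h).of_isClosed_subset hB
      (Set.subset_preimage_image f B)
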